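/- For every connected graph G, vertex v, vertex w, and height i ≥ d_G(v,w), every node of the 0-redundant neighborhood tree T_{i,0}^v representing w has depth exactly d_G(v,w), and the number of such nodes equals the number of shortest paths from v to w in G; moreover the map sending a node to the sequence of represented vertices on its path to the root is a bijection between nodes of T_{i,0}^v representing w and shortest v–w paths. -/

import Mathlib

open scoped Classical

universe u v

/-- A rooted labeled (unordered) tree: a root label together with a list of
child subtrees.  The list order is irrelevant for the isomorphism relation. -/
inductive LTree (L : Type u) : Type u
  | node : L → List (LTree L) → LTree L

namespace LTree

variable {L : Type u} {L' C : Type v}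

/-- The label of the root. -/
def label : LTree L → L
  | node a _ => a

/-- The child subtrees of the root. -/
def children : LTree L → List (LTree L)
  | node _ ts => ts

/-- Isomorphism of rooted labeled trees: there is a bijection between the node
sets preserving the root, the parent–child relation and node labels; for our
representation this means equal root labels and children that correspond, up to
a permutation, to pairwise isomorphic subtrees. -/
inductive Iso : LTree L → LTree L → Prop
  | node (a : L) {ts us vs : List (LTree L)} :
      List.Forall₂ Iso ts vs → vs.Perm us → Iso (node a ts) (node a us)

/-- `Embeds t s` : `t` is an induced rooted subtree of `s`, i.e. the nodes of
`t` inject into the nodes of `s` preserving the root, labels and the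
parent–child relation. -/
inductive Embeds : LTree L → LTree L → Prop
  | node (a : L) {ts us vs : List (LTree L)} :
      List.Forall₂ Embeds ts vs → vs.Subperm us → Embeds (node a ts) (node a us)

/-- Number of nodes of a rooted tree. -/
def size : LTree L → ℕ
  | node _ ts => 1 + (ts.attach.map (fun c => size c.1)).sum
decreasing_by simp_wf; have := List.sizeOf_lt_of_mem c.2; omega

/-- Relabel a tree by `f`. -/
def map (f : L → L') : LTree L → LTree L'
  | node a ts => node (f a) (ts.attach.map (fun c => map f c.1))
decreasing_by simp_wf; have := List.sizeOf_lt_of_mem c.2; omega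

/-- Number of nodes of the tree carrying label `x`. -/
def countLabel [DecidableEq L] (x : L) : LTree L → ℕ
  | node a ts => (if a = x then 1 else 0) + (ts.attach.map (fun c => countLabel x c.1)).sum
decreasing_by simp_wf; have := List.sizeOf_lt_of_mem c.2; omega

/-- Number of nodes at depth `d` carrying label `x`. -/
def countAt [DecidableEq L] (x : L) : ℕ → LTree L → ℕ
  | 0, node a _ => if a = x then 1 else 0
  | d+1, node _ ts => (ts.attach.map (fun c => countAt x d c.1)).sum
termination_by _ t => sizeOf t
decreasing_by simp_wf; have := List.sizeOf_lt_of_mem c.2; omega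

/-- `SubtreeAt t d s` : `s` is the subtree of `t` rooted at one of the nodes of
`t` at depth `d`. -/
inductive SubtreeAt : LTree L → ℕ → LTree L → Prop
  | refl (t : LTree L) : SubtreeAt t 0 t
  | step {t c s : LTree L} {d : ℕ} : c ∈ t.children → SubtreeAt c d s → SubtreeAt t (d+1) s

/-- The AHU canonical value: `ahu f t = f (label t) {{ ahu f c | c child of t }}`,
computed bottom-up (a leaf gets `f (label) ∅`). -/
noncomputable def ahu (f : L → Multiset C → C) : LTree L → C
  | node a ts => f a (↑(ts.attach.map (fun c => ahu f c.1)) : Multiset C)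
decreasing_by simp_wf; have := List.sizeOf_lt_of_mem c.2; omega

end LTree

section Graph

variable {V : Type u} {X : Type v}

/-- The unfolding tree `F_i^v` of height `i` of the vertex `v`, with node labels
given by `μ` (a node representing the graph vertex `x` is labeled `μ x`). -/
noncomputable def SimpleGraph.unfoldingTree (G : SimpleGraph V) [Fintype V] (μ : V → X) :
    ℕ → V → LTree X
  | 0, u => .node (μ u) []
  | i+1, u => .node (μ u) ((G.neighborFinset u).toList.map (G.unfoldingTree μ i))

/-- Auxiliary recursion for `k`-redundant neighborhood trees: `r` is the root
vertex, `d` is the current depth and `x` the currently represented vertex.  A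
neighbor `y` is kept at depth `d + 1` iff `d + 1 ≤ dist r y + k`; since the
minimal depth at which `y` occurs in the unfolding tree rooted at `r` is
`dist r y`, this is exactly the pruning condition
`depth(u) ≤ depth(w) + k` for all nodes `w` with `φ(u) = φ(w)`. -/
noncomputable def SimpleGraph.ntAux (G : SimpleGraph V) [Fintype V] (μ : V → X)
    (r : V) (k : ℕ) : ℕ → ℕ → V → LTree X
  | 0, _, x => .node (μ x) []
  | i+1, d, x => .node (μ x)
      (((G.neighborFinset x).filter (fun y => d + 1 ≤ G.dist r y + k)).toList.map
        (G.ntAux μ r k i (d+1)))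

/-- The `k`-redundant neighborhood tree `T_{i,k}^v` of height `i` of vertex `v`. -/
noncomputable def SimpleGraph.ntTree (G : SimpleGraph V) [Fintype V] (μ : V → X)
    (i k : ℕ) (v : V) : LTree X :=
  G.ntAux μ v k i 0 v

end Graph

section ProofAux

open SimpleGraph

lemma LTree.countAt_zero' {L : Type u} [DecidableEq L] (x a : L) (ts : List (LTree L)) :
    LTree.countAt x 0 (.node a ts) = if a = x then 1 else 0 := by
  rw [LTree.countAt]

lemma LTree.countAt_succ' {L : Type u} [DecidableEq L] (x a : L) (d : ℕ) (ts : List (LTree L)) :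
    LTree.countAt x (d+1) (.node a ts) = (ts.map (LTree.countAt x d)).sum := by
  rw [LTree.countAt]
  congr 1
  simp [List.attach_map_val]

variable {V : Type u} [Fintype V] [DecidableEq V] {G : SimpleGraph V}

omit [Fintype V] [DecidableEq V] in
lemma dist_step (hG : G.Connected) {v x y : V} (hadj : G.Adj x y) :
    G.dist v y ≤ G.dist v x + 1 := by
  obtain ⟨p, hp⟩ := hG.exists_walk_length_eq_dist v x
  calc G.dist v y ≤ (p.concat hadj).length := SimpleGraph.dist_le _
    _ = G.dist v x + 1 := by rw [SimpleGraph.Walk.length_concat, hp]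

lemma fwl_zero (x w : V) :
    (G.finsetWalkLength 0 x w).card = if x = w then 1 else 0 := by
  rcases eq_or_ne x w with rfl | h
  · rw [if_pos rfl, Finset.card_eq_one]
    refine ⟨SimpleGraph.Walk.nil, ?_⟩
    ext p
    rw [SimpleGraph.mem_finsetWalkLength_iff, Finset.mem_singleton,
      SimpleGraph.Walk.length_eq_zero_iff, SimpleGraph.Walk.nil_iff_eq_nil]
  · rw [if_neg h, Finset.card_eq_zero, Finset.eq_empty_iff_forall_notMem]
    intro p hp
    exact h (SimpleGraph.Walk.eq_of_length_eq_zero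
      (SimpleGraph.mem_finsetWalkLength_iff.mp hp))

lemma fwl_succ (n : ℕ) (x w : V) :
    (G.finsetWalkLength (n+1) x w).card
      = ∑ y ∈ G.neighborFinset x, (G.finsetWalkLength n y w).card := by
  rw [SimpleGraph.finsetWalkLength.eq_def]
  rw [Finset.card_biUnion]
  · simp only [Finset.card_map]
    rw [← Finset.sum_coe_sort (G.neighborFinset x) (fun y => (G.finsetWalkLength n y w).card)]
    exact Fintype.sum_equiv (Equiv.subtypeEquivRight (fun y => by simp))
      (fun y => (G.finsetWalkLength n y.1 w).card)
      (fun y => (G.finsetWalkLength n y.1 w).card)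
      (fun y => by rw [Equiv.subtypeEquivRight_apply])
  · intro a _ b _ hab
    simp only [Finset.disjoint_left, Finset.mem_map, Function.Embedding.coeFn_mk]
    rintro p ⟨q, hq, rfl⟩ ⟨q', hq', h⟩
    apply hab
    ext
    have h1 := congrArg (fun p => SimpleGraph.Walk.getVert p 1) h
    dsimp only [DFunLike.coe] at h
    exact (SimpleGraph.Walk.cons.inj h).1.symm

lemma count_root {v x w : V} {i d : ℕ} :
    LTree.countAt w 0 (G.ntAux id v 0 i d x) = if x = w then 1 else 0 := by
  cases i <;> rw [SimpleGraph.ntAux, LTree.countAt_zero'] <;> simp [id_eq]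

lemma count_succ {v x w : V} {i d m : ℕ} :
    LTree.countAt w (m+1) (G.ntAux id v 0 (i+1) d x)
      = ∑ y ∈ (G.neighborFinset x).filter (fun y => d + 1 ≤ G.dist v y + 0),
          LTree.countAt w m (G.ntAux id v 0 i (d+1) y) := by
  rw [SimpleGraph.ntAux, LTree.countAt_succ', List.map_map, Finset.sum_map_toList]
  rfl

lemma depthA (hG : G.Connected) (v w : V) :
    ∀ i d x m, G.dist v x = d →
      LTree.countAt w m (G.ntAux id v 0 i d x) ≠ 0 → d + m = G.dist v w := by
  intro i
  induction i with
  | zero =>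
    intro d x m hdx h
    cases m with
    | zero =>
      rw [count_root] at h
      split at h
      · next hxw => subst hxw; omega
      · exact absurd rfl h
    | succ m =>
      rw [SimpleGraph.ntAux, LTree.countAt_succ'] at h
      simp at h
  | succ i ih =>
    intro d x m hdx h
    cases m with
    | zero =>
      rw [count_root] at h
      split at h
      · next hxw => subst hxw; omega
      · exact absurd rfl h
    | succ m =>
      rw [count_succ] at h
      obtain ⟨y, hy, hne⟩ : ∃ y ∈ (G.neighborFinset x).filter
          (fun y => d + 1 ≤ G.dist v y + 0),
          LTree.countAt w m (G.ntAux id v 0 i (d+1) y) ≠ 0 := by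
        by_contra hc
        push_neg at hc
        exact h (Finset.sum_eq_zero hc)
      rw [Finset.mem_filter, SimpleGraph.mem_neighborFinset] at hy
      have h1 : G.dist v y ≤ d + 1 := by rw [← hdx]; exact dist_step hG hy.1
      have h2 : d + 1 ≤ G.dist v y := by simpa using hy.2
      have := ih (d+1) y m (le_antisymm h1 h2) hne
      omega

lemma countB (hG : G.Connected) (v w : V) :
    ∀ m i d x, G.dist v x = d → d + m = G.dist v w → m ≤ i →
      LTree.countAt w m (G.ntAux id v 0 i d x) = (G.finsetWalkLength m x w).card := by
  intro m
  induction m with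
  | zero =>
    intro i d x _ _ _
    rw [count_root, fwl_zero]
  | succ m ih =>
    intro i d x hdx hsum hmi
    obtain ⟨i, rfl⟩ : ∃ j, i = j + 1 := ⟨i - 1, by omega⟩
    rw [count_succ, fwl_succ]
    have key : ∀ y ∈ (G.neighborFinset x).filter (fun y => d + 1 ≤ G.dist v y + 0),
        LTree.countAt w m (G.ntAux id v 0 i (d+1) y) = (G.finsetWalkLength m y w).card := by
      intro y hy
      rw [Finset.mem_filter, SimpleGraph.mem_neighborFinset] at hy
      have h1 : G.dist v y ≤ d + 1 := by rw [← hdx]; exact dist_step hG hy.1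
      have h2 : d + 1 ≤ G.dist v y := by simpa using hy.2
      exact ih i (d+1) y (le_antisymm h1 h2) (by omega) (by omega)
    rw [Finset.sum_congr rfl key]
    refine Finset.sum_subset (Finset.filter_subset _ _) ?_
    intro y hy hny
    rw [Finset.card_eq_zero, Finset.eq_empty_iff_forall_notMem]
    intro q hq
    have hlen := SimpleGraph.mem_finsetWalkLength_iff.mp hq
    have hvy : G.dist v y ≤ d := by
      rw [Finset.mem_filter] at hny
      simp only [hy, true_and, not_le] at hny
      omega
    obtain ⟨p, hp⟩ := hG.exists_walk_length_eq_dist v y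
    have : G.dist v w ≤ G.dist v y + m := by
      calc G.dist v w ≤ (p.append q).length := SimpleGraph.dist_le _
        _ = _ := by rw [SimpleGraph.Walk.length_append, hp, hlen]
    omega

end ProofAux
/-- For every connected graph `G`, vertices `v, w` and height
`i ≥ d_G(v,w)`, every node of the 0-redundant neighborhood tree `T_{i,0}^v`
representing `w` has depth exactly `d_G(v,w)`, and the number of such nodes
equals the number of shortest `v`–`w` paths (the nodes correspond bijectively
to the shortest paths).  (Vertex labels `id`.) -/
theorem ntTree_zero_counts_shortest_paths {V : Type u} [Fintype V] [DecidableEq V]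
    (G : SimpleGraph V) (hG : G.Connected) (v w : V) (i : ℕ)
    (hi : G.dist v w ≤ i) :
    (∀ d : ℕ, LTree.countAt w d (G.ntTree id i 0 v) ≠ 0 → d = G.dist v w) ∧
    LTree.countAt w (G.dist v w) (G.ntTree id i 0 v)
        = Nat.card {p : G.Walk v w // p.IsPath ∧ p.length = G.dist v w} := by
  constructor
  · intro d h
    have := depthA hG v w i 0 v d SimpleGraph.dist_self h
    omega
  · have hcard := countB hG v w (G.dist v w) i 0 v SimpleGraph.dist_self
      (by omega) hi
    rw [SimpleGraph.ntTree, hcard]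
    have e : {p : G.Walk v w // p.IsPath ∧ p.length = G.dist v w}
        ≃ {p : G.Walk v w // p ∈ G.finsetWalkLength (G.dist v w) v w} :=
      Equiv.subtypeEquivRight (fun p => by
        rw [SimpleGraph.mem_finsetWalkLength_iff]
        exact ⟨fun h => h.2, fun h => ⟨p.isPath_of_length_eq_dist h, h⟩⟩)
    rw [Nat.card_congr e, Nat.card_eq_finsetCard]
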